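/- arXiv:2504.20806 — 7 statements merged into one kernel-verified Lean document; each statement's English description precedes it below -/
import Mathlib

section
/- Let X and Y be geodesic metric spaces and f : X → Y a weakly H-quasisymmetric homeomorphism. Then for all distinct x,a,b ∈ X with t = d_X(x,a)/d_X(x,b) ≥ 1 (or any t > 0), one has d_Y(f(x),f(a)) ≤ (t+1)·H^{t+1}·d_Y(f(x),f(b)). -/
/-- A metric space is geodesic: every pair of points is joined by a geodesic. -/
def IsGeodesicSpace (X : Type*) [MetricSpace X] : Prop :=
  ∀ x y : X, ∃ γ : ℝ → X, γ 0 = x ∧ γ (dist x y) = y ∧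
    ∀ s ∈ Set.Icc (0 : ℝ) (dist x y), ∀ t ∈ Set.Icc (0 : ℝ) (dist x y),
      dist (γ s) (γ t) = |s - t|

/-- Upper-bound half of Theorem 3.3: for a weakly `H`-quasisymmetric homeomorphism
between geodesic spaces, with `t = d(x,a)/d(x,b)`, one has
`d(f x, f a) ≤ (t+1)·H^(t+1)·d(f x, f b)`. -/
theorem weakly_qs_ratio_upper_bound {X Y : Type*} [MetricSpace X] [MetricSpace Y]
    (hX : IsGeodesicSpace X) (hY : IsGeodesicSpace Y)
    (f : X ≃ₜ Y) (H : ℝ) (hH : 1 ≤ H)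
    (hwqs : ∀ x y z : X, dist x y ≤ dist x z →
      dist (f x) (f y) ≤ H * dist (f x) (f z)) :
    ∀ x a b : X, x ≠ a → x ≠ b → a ≠ b →
      dist (f x) (f a) ≤
        (dist x a / dist x b + 1) * H ^ (dist x a / dist x b + 1) * dist (f x) (f b) := by
  intro x a b hxa hxb hab
  set D := dist x a with hD
  set B := dist x b with hB
  have hD0 : 0 < D := dist_pos.mpr hxa
  have hB0 : 0 < B := dist_pos.mpr hxb
  have hC0 : 0 ≤ dist (f x) (f b) := dist_nonneg
  set t := D / B with ht
  have ht0 : 0 < t := div_pos hD0 hB0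
  have hH0 : 0 < H := lt_of_lt_of_le one_pos hH
  have hrpos : 0 < H ^ (t + 1) := Real.rpow_pos_of_pos hH0 _
  have hHle : H ≤ (t + 1) * H ^ (t + 1) := by
    have h2 : H ^ (1 : ℝ) ≤ H ^ (t + 1) :=
      Real.rpow_le_rpow_of_exponent_le hH (by linarith)
    rw [Real.rpow_one] at h2
    nlinarith
  by_cases hle : D ≤ B
  · have h := hwqs x a b hle
    have h2 : H * dist (f x) (f b) ≤ (t + 1) * H ^ (t + 1) * dist (f x) (f b) :=
      mul_le_mul_of_nonneg_right hHle hC0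
    linarith
  · push_neg at hle
    have ht1 : 1 < t := (one_lt_div hB0).mpr hle
    obtain ⟨γ, hγ0, hγD, hγd⟩ := hX x a
    set n := ⌈t⌉₊ with hn
    have hn0 : 0 < n := Nat.ceil_pos.mpr ht0
    have hn0' : (0 : ℝ) < n := by exact_mod_cast hn0
    have hnt : (n : ℝ) ≤ t + 1 := le_of_lt (Nat.ceil_lt_add_one ht0.le)
    have htn : t ≤ n := Nat.le_ceil t
    set s := D / n with hs
    have hs0 : 0 < s := div_pos hD0 hn0'
    have hsB : s ≤ B := by
      rw [hs, div_le_iff₀ hn0']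
      calc D = t * B := by rw [ht]; exact (div_mul_cancel₀ D hB0.ne').symm
      _ ≤ n * B := mul_le_mul_of_nonneg_right htn hB0.le
      _ = B * n := mul_comm _ _
    set p : ℕ → X := fun i => γ ((min i n : ℕ) * s) with hp
    have hmem : ∀ i : ℕ, ((min i n : ℕ) : ℝ) * s ∈ Set.Icc (0 : ℝ) D := by
      intro i
      constructor
      · positivity
      · have h1 : ((min i n : ℕ) : ℝ) ≤ n := by exact_mod_cast Nat.min_le_right i n
        calc ((min i n : ℕ) : ℝ) * s ≤ n * s := mul_le_mul_of_nonneg_right h1 hs0.le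
        _ = D := by rw [hs, mul_comm]; exact div_mul_cancel₀ D hn0'.ne'
    have hdist : ∀ i j : ℕ, dist (p i) (p j) = |((min i n : ℕ) : ℝ) - (min j n : ℕ)| * s := by
      intro i j
      rw [hp]
      simp only
      rw [hγd _ (hmem i) _ (hmem j), ← sub_mul, abs_mul, abs_of_nonneg hs0.le]
    have hp0 : p 0 = x := by simp [hp, hγ0]
    have hpn : p n = a := by
      have : ((n : ℕ) : ℝ) * s = D := by rw [hs, mul_comm]; exact div_mul_cancel₀ D hn0'.ne'
      simp [hp, this, hγD, hD]
    -- step distances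
    have hstep : ∀ i : ℕ, i + 1 ≤ n → dist (p i) (p (i + 1)) = s := by
      intro i hi
      rw [hdist]
      have h1 : min i n = i := min_eq_left (by omega)
      have h2 : min (i + 1) n = i + 1 := min_eq_left hi
      rw [h1, h2]
      push_cast
      rw [abs_of_nonpos (by linarith)]
      ring
    have key : ∀ i : ℕ, i + 1 ≤ n →
        dist (f (p i)) (f (p (i + 1))) ≤ H ^ (i + 1) * dist (f x) (f b) := by
      intro i
      induction i with
      | zero =>
        intro hi
        have h1 : dist (p 0) (p 1) ≤ dist (p 0) b := by
          rw [hstep 0 hi, hp0]; exact hsB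
        have h2 := hwqs (p 0) (p 1) b h1
        rw [hp0] at h2
        simpa [hp0] using h2
      | succ i ih =>
        intro hi
        have hi' : i + 1 ≤ n := by omega
        have heq : dist (p (i + 1)) (p (i + 2)) ≤ dist (p (i + 1)) (p i) := by
          rw [hstep (i + 1) hi]
          rw [dist_comm, hstep i hi']
        have h1 := hwqs (p (i + 1)) (p (i + 2)) (p i) heq
        have h2 : dist (f (p (i + 1))) (f (p i)) ≤ H ^ (i + 1) * dist (f x) (f b) := by
          rw [dist_comm]; exact ih hi'
        calc dist (f (p (i + 1))) (f (p (i + 2))) ≤ H * dist (f (p (i + 1))) (f (p i)) := h1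
        _ ≤ H * (H ^ (i + 1) * dist (f x) (f b)) := by
            exact mul_le_mul_of_nonneg_left h2 hH0.le
        _ = H ^ (i + 2) * dist (f x) (f b) := by ring
    have chain : dist (f (p 0)) (f (p n)) ≤
        ∑ i ∈ Finset.range n, dist (f (p i)) (f (p (i + 1))) :=
      dist_le_range_sum_dist (fun i => f (p i)) n
    have hsum : ∑ i ∈ Finset.range n, dist (f (p i)) (f (p (i + 1))) ≤
        (n : ℝ) * H ^ n * dist (f x) (f b) := by
      calc ∑ i ∈ Finset.range n, dist (f (p i)) (f (p (i + 1)))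
          ≤ ∑ i ∈ Finset.range n, H ^ n * dist (f x) (f b) := by
            apply Finset.sum_le_sum
            intro i hi
            have hi' : i + 1 ≤ n := Finset.mem_range.mp hi
            calc dist (f (p i)) (f (p (i + 1))) ≤ H ^ (i + 1) * dist (f x) (f b) := key i hi'
            _ ≤ H ^ n * dist (f x) (f b) :=
              mul_le_mul_of_nonneg_right (pow_le_pow_right₀ hH hi') hC0
      _ = (n : ℝ) * H ^ n * dist (f x) (f b) := by
            rw [Finset.sum_const, Finset.card_range]; push_cast; ring
    have hfinal : (n : ℝ) * H ^ n ≤ (t + 1) * H ^ (t + 1) := by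
      have h1 : (H : ℝ) ^ n = H ^ ((n : ℕ) : ℝ) := (Real.rpow_natCast H n).symm
      have h2 : H ^ ((n : ℕ) : ℝ) ≤ H ^ (t + 1) :=
        Real.rpow_le_rpow_of_exponent_le hH hnt
      rw [h1]
      have hn0'' : (0 : ℝ) ≤ n := hn0'.le
      have := Real.rpow_pos_of_pos hH0 ((n : ℕ) : ℝ)
      nlinarith
    calc dist (f x) (f a) = dist (f (p 0)) (f (p n)) := by rw [hp0, hpn]
    _ ≤ ∑ i ∈ Finset.range n, dist (f (p i)) (f (p (i + 1))) := chain
    _ ≤ (n : ℝ) * H ^ n * dist (f x) (f b) := hsum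
    _ ≤ (t + 1) * H ^ (t + 1) * dist (f x) (f b) :=
        mul_le_mul_of_nonneg_right hfinal hC0
end

section
/- Let X and Y be geodesic metric spaces. A homeomorphism f : X → Y is weakly H-quasisymmetric for some H ≥ 1 if and only if f is η-quasisymmetric for some increasing homeomorphism η : [0,∞) → [0,∞). -/
noncomputable def qsGauge (H : ℝ) (t : ℝ) : ℝ :=
  if t ≤ 0 then 0 else 2*H*(Real.exp (8*H*t) - 1) + 8*H / (1 + Real.log (1 + 1/t))

lemma qsGauge_zero (H : ℝ) : qsGauge H 0 = 0 := by simp [qsGauge]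

lemma qsGauge_of_pos (H : ℝ) {t : ℝ} (ht : 0 < t) :
    qsGauge H t = 2*H*(Real.exp (8*H*t) - 1) + 8*H / (1 + Real.log (1 + 1/t)) :=
  if_neg (not_le.2 ht)

lemma qsGauge_denom_pos {t : ℝ} (ht : 0 < t) : 0 < 1 + Real.log (1 + 1/t) := by
  have h1 : 0 < Real.log (1 + 1/t) := Real.log_pos (by
    have : 0 < 1/t := by positivity
    linarith)
  linarith

lemma qsGauge_exp_part_pos {H : ℝ} (hH : 1 ≤ H) {t : ℝ} (ht : 0 < t) :
    0 < 2*H*(Real.exp (8*H*t) - 1) := by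
  have h1 : (1:ℝ) < Real.exp (8*H*t) := Real.one_lt_exp_iff.2 (by nlinarith)
  nlinarith

lemma qsGauge_pos {H : ℝ} (hH : 1 ≤ H) {t : ℝ} (ht : 0 < t) : 0 < qsGauge H t := by
  rw [qsGauge_of_pos H ht]
  have h2 : 0 < 8*H / (1 + Real.log (1 + 1/t)) := by
    have := qsGauge_denom_pos ht
    positivity
  linarith [qsGauge_exp_part_pos hH ht]

lemma qsGauge_strictMono {H : ℝ} (hH : 1 ≤ H) : StrictMonoOn (qsGauge H) (Set.Ici 0) := by
  intro s hs t ht hst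
  simp only [Set.mem_Ici] at hs ht
  rcases eq_or_lt_of_le hs with hs0 | hs0
  · rw [← hs0, qsGauge_zero]
    exact qsGauge_pos hH (by linarith)
  · have ht0 : 0 < t := lt_trans hs0 hst
    rw [qsGauge_of_pos H hs0, qsGauge_of_pos H ht0]
    have h1 : Real.exp (8*H*s) < Real.exp (8*H*t) := Real.exp_lt_exp.2 (by nlinarith)
    have h2 : 8*H / (1 + Real.log (1 + 1/s)) ≤ 8*H / (1 + Real.log (1 + 1/t)) := by
      apply div_le_div_of_nonneg_left (by linarith) (qsGauge_denom_pos ht0)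
      have h3 : 1/t ≤ 1/s := one_div_le_one_div_of_le hs0 hst.le
      have h4 : Real.log (1 + 1/t) ≤ Real.log (1 + 1/s) :=
        Real.log_le_log (by positivity) (by linarith)
      linarith
    nlinarith

lemma qsGauge_tendsto_zero (H : ℝ) :
    Filter.Tendsto (qsGauge H) (nhdsWithin 0 (Set.Ioi 0)) (nhds 0) := by
  have h1 : Filter.Tendsto (fun t : ℝ => 2*H*(Real.exp (8*H*t) - 1))
      (nhdsWithin 0 (Set.Ioi 0)) (nhds 0) := by
    have hc : Continuous (fun t : ℝ => 2*H*(Real.exp (8*H*t) - 1)) := by continuity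
    have h := hc.tendsto 0
    simp only [mul_zero, Real.exp_zero] at h
    norm_num at h
    exact h.mono_left nhdsWithin_le_nhds
  have h2 : Filter.Tendsto (fun t : ℝ => 8*H / (1 + Real.log (1 + 1/t)))
      (nhdsWithin 0 (Set.Ioi 0)) (nhds 0) := by
    have ha : Filter.Tendsto (fun t : ℝ => 1/t) (nhdsWithin 0 (Set.Ioi 0)) Filter.atTop := by
      simpa using tendsto_inv_nhdsGT_zero
    have hb : Filter.Tendsto (fun t : ℝ => 1 + Real.log (1 + 1/t))
        (nhdsWithin 0 (Set.Ioi 0)) Filter.atTop :=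
      Filter.tendsto_atTop_add_const_left _ 1
        (Real.tendsto_log_atTop.comp (Filter.tendsto_atTop_add_const_left _ 1 ha))
    exact Filter.Tendsto.const_div_atTop hb _
  have h3 := h1.add h2
  norm_num at h3
  refine h3.congr' ?_
  filter_upwards [self_mem_nhdsWithin] with t ht
  rw [qsGauge_of_pos H ht, one_div]

lemma qsGauge_continuousOn (H : ℝ) : ContinuousOn (qsGauge H) (Set.Ici 0) := by
  intro t ht
  simp only [Set.mem_Ici] at ht
  rcases eq_or_lt_of_le ht with ht0 | ht0
  · rw [ContinuousWithinAt, ← ht0, qsGauge_zero, ← Set.Ioi_insert, nhdsWithin_insert,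
      Filter.tendsto_sup]
    constructor
    · have := tendsto_pure_nhds (qsGauge H) (0:ℝ)
      rwa [qsGauge_zero] at this
    · exact qsGauge_tendsto_zero H
  · apply ContinuousAt.continuousWithinAt
    have hev : ∀ᶠ s in nhds t, qsGauge H s =
        2*H*(Real.exp (8*H*s) - 1) + 8*H / (1 + Real.log (1 + 1/s)) := by
      filter_upwards [IsOpen.mem_nhds isOpen_Ioi ht0] with s hs
      exact qsGauge_of_pos H hs
    rw [continuousAt_congr hev]
    have c1 : ContinuousAt (fun s : ℝ => 1/s) t :=
      ContinuousAt.div continuousAt_const continuousAt_id ht0.ne'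
    have c2 : ContinuousAt (fun s : ℝ => 1 + 1/s) t := continuousAt_const.add c1
    have c3 : ContinuousAt (fun s : ℝ => Real.log (1 + 1/s)) t := by
      apply (Real.continuousAt_log ?_).comp c2
      have : 0 < 1/t := by positivity
      linarith
    have c4 : ContinuousAt (fun s : ℝ => 1 + Real.log (1 + 1/s)) t := continuousAt_const.add c3
    have c5 : ContinuousAt (fun s : ℝ => 8*H / (1 + Real.log (1 + 1/s))) t :=
      ContinuousAt.div continuousAt_const c4 (qsGauge_denom_pos ht0).ne'
    have c6 : ContinuousAt (fun s : ℝ => 2*H*(Real.exp (8*H*s) - 1)) t := by fun_prop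
    exact c6.add c5

lemma qsGauge_surjOn {H : ℝ} (hH : 1 ≤ H) :
    Set.SurjOn (qsGauge H) (Set.Ici 0) (Set.Ici 0) := by
  intro y hy
  simp only [Set.mem_Ici] at hy
  rcases eq_or_lt_of_le hy with hy0 | hy0
  · exact ⟨0, Set.self_mem_Ici, by rw [qsGauge_zero, hy0]⟩
  · have hTy : y ≤ qsGauge H y := by
      rw [qsGauge_of_pos H hy0]
      have h1 : 8*H*y + 1 ≤ Real.exp (8*H*y) := Real.add_one_le_exp _
      have h2 : 0 < 8*H / (1 + Real.log (1 + 1/y)) := by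
        have := qsGauge_denom_pos hy0
        positivity
      have h3 : (0:ℝ) ≤ 2*H * (Real.exp (8*H*y) - 1 - 8*H*y) :=
        mul_nonneg (by linarith) (by linarith)
      have h4 : (0:ℝ) ≤ y * (16*H^2 - 1) := mul_nonneg hy (by nlinarith)
      nlinarith
    have hsub : Set.Icc (0:ℝ) y ⊆ Set.Ici 0 := Set.Icc_subset_Ici_self
    have hIVT := intermediate_value_Icc hy ((qsGauge_continuousOn H).mono hsub)
    have hmem : y ∈ Set.Icc (qsGauge H 0) (qsGauge H y) := by
      rw [qsGauge_zero]; exact ⟨hy, hTy⟩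
    obtain ⟨s, hs, hsv⟩ := hIVT hmem
    exact ⟨s, hsub hs, hsv⟩

lemma qsGauge_ge_big {H : ℝ} (hH : 1 ≤ H) {t : ℝ} (ht : 1/4 ≤ t) :
    H * (1+H) ^ (⌈t⌉₊) ≤ qsGauge H t := by
  have ht0 : 0 < t := by linarith
  rw [qsGauge_of_pos H ht0]
  have hn : ((⌈t⌉₊ : ℕ) : ℝ) ≤ t + 1 := (Nat.ceil_lt_add_one ht0.le).le
  have h1 : (1+H) ≤ Real.exp H := by
    have := Real.add_one_le_exp H; linarith
  have h2 : (1+H) ^ (⌈t⌉₊) ≤ (Real.exp H) ^ (⌈t⌉₊) :=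
    pow_le_pow_left₀ (by linarith) h1 _
  have h3 : (Real.exp H) ^ (⌈t⌉₊) = Real.exp ((⌈t⌉₊ : ℝ) * H) := by
    rw [← Real.exp_nat_mul]
  have h4 : Real.exp ((⌈t⌉₊ : ℝ) * H) ≤ Real.exp (8*H*t) := by
    apply Real.exp_le_exp.2
    nlinarith
  have h5 : (2:ℝ) ≤ Real.exp (8*H*t) := by
    have := Real.add_one_le_exp (8*H*t)
    nlinarith
  have h6 : 0 < 8*H / (1 + Real.log (1 + 1/t)) := by
    have := qsGauge_denom_pos ht0
    positivity
  nlinarith [pow_nonneg (by linarith : (0:ℝ) ≤ 1 + H) ⌈t⌉₊]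

lemma qsGauge_ge_mid {H : ℝ} (hH : 1 ≤ H) {t : ℝ} (ht : 1/64 ≤ t) :
    H ≤ qsGauge H t := by
  have ht0 : 0 < t := by linarith
  rw [qsGauge_of_pos H ht0]
  have he7 : (65:ℝ) ≤ Real.exp 7 := by
    have h1 : Real.exp 7 = (Real.exp 1) ^ (7:ℕ) := by
      rw [← Real.exp_nat_mul]; norm_num
    have h2 : (2.7:ℝ) ^ (7:ℕ) ≤ (Real.exp 1) ^ (7:ℕ) :=
      pow_le_pow_left₀ (by norm_num) (le_of_lt (by
        have := Real.exp_one_gt_d9; norm_num at this ⊢; linarith)) _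
    have h3 : (65:ℝ) ≤ (2.7:ℝ) ^ (7:ℕ) := by norm_num
    linarith [h1 ▸ h2]
  have hfrac : 1 + 1/t ≤ 65 := by
    have : 1/t ≤ 64 := by rw [div_le_iff₀ ht0]; linarith
    linarith
  have hlog : Real.log (1 + 1/t) ≤ 7 := by
    rw [Real.log_le_iff_le_exp (by positivity)]
    linarith
  have hdenom := qsGauge_denom_pos ht0
  have h2 : 8*H/8 ≤ 8*H / (1 + Real.log (1 + 1/t)) :=
    div_le_div_of_nonneg_left (by linarith) hdenom (by linarith)
  have h3 : (0:ℝ) ≤ 2*H*(Real.exp (8*H*t) - 1) := by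
    have : (1:ℝ) ≤ Real.exp (8*H*t) := Real.one_le_exp (by positivity)
    nlinarith
  have h4 : 8*H/8 = H := by ring
  linarith [h4 ▸ h2]

lemma qsGauge_ge_small {H : ℝ} (hH : 1 ≤ H) {t : ℝ} (ht0 : 0 < t) (ht : t < 1/64) :
    4*H*Real.log 2 / (Real.log (1/t) - 2*Real.log 2) ≤ qsGauge H t := by
  set l2 := Real.log 2 with hl2def
  set L := Real.log (1/t) with hLdef
  have hl2u : l2 < 0.6931472 := by
    have := Real.log_two_lt_d9; rw [hl2def]; linarith
  have hl2l : 0.6931471 < l2 := by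
    have := Real.log_two_gt_d9; rw [hl2def]; linarith
  have hinv : (64:ℝ) < 1/t := by
    rw [lt_div_iff₀ ht0]; linarith
  have hL : 6*l2 ≤ L := by
    have h64 : Real.log 64 ≤ L := Real.log_le_log (by norm_num) hinv.le
    have : Real.log 64 = 6 * l2 := by
      rw [show (64:ℝ) = 2^(6:ℕ) by norm_num, Real.log_pow]
      push_cast; ring
    linarith
  have hup : Real.log (1 + 1/t) ≤ l2 + L := by
    have h1 : 1 + 1/t ≤ 2 * (1/t) := by
      have : (1:ℝ) ≤ 1/t := by
        rw [le_div_iff₀ ht0]; linarith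
      linarith
    have h2 : Real.log (1 + 1/t) ≤ Real.log (2 * (1/t)) :=
      Real.log_le_log (by positivity) h1
    rwa [Real.log_mul (by norm_num) (by positivity)] at h2
  have dL : 0 < L - 2*l2 := by nlinarith
  have dR := qsGauge_denom_pos ht0
  have key : 4*H*l2 / (L - 2*l2) ≤ 8*H / (1 + Real.log (1 + 1/t)) := by
    rw [div_le_div_iff₀ dL dR]
    have hH0 : (0:ℝ) < H := by linarith
    have hbracket : 4*l2 * (1 + (l2 + L)) ≤ 8 * (L - 2*l2) := by nlinarith
    nlinarith [mul_le_mul_of_nonneg_left hup (by positivity : (0:ℝ) ≤ 4*H*l2)]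
  have h3 : (0:ℝ) ≤ 2*H*(Real.exp (8*H*t) - 1) := by
    have : (1:ℝ) ≤ Real.exp (8*H*t) := Real.one_le_exp (by positivity)
    nlinarith
  rw [qsGauge_of_pos H ht0]
  linarith

lemma qs_chain {X Y : Type*} [MetricSpace X] [MetricSpace Y]
    (hX : IsGeodesicSpace X) (f : X ≃ₜ Y) {H : ℝ} (hH : 1 ≤ H)
    (W : ∀ x a b : X, dist x a ≤ dist x b → dist (f x) (f a) ≤ H * dist (f x) (f b)) :
    ∀ n : ℕ, ∀ x a b : X, dist x a ≤ (n + 1) * dist x b →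
      dist (f x) (f a) ≤ H * (1 + H) ^ n * dist (f x) (f b) := by
  intro n
  induction n with
  | zero =>
    intro x a b h
    simpa using W x a b (by simpa using h)
  | succ n ih =>
    intro x a b h
    have hD : (0:ℝ) ≤ dist (f x) (f b) := dist_nonneg
    have hpow : (0:ℝ) ≤ H * (1+H)^n := by positivity
    by_cases hcase : dist x a ≤ (n + 1) * dist x b
    · have h1 := ih x a b hcase
      have h2 : H * (1+H)^n ≤ H * (1+H)^(n+1) := by
        rw [pow_succ]
        nlinarith [mul_nonneg hpow (show (0:ℝ) ≤ H by linarith)]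
      nlinarith
    · push_neg at hcase
      have hR : 0 < dist x b := by
        rcases (dist_nonneg (x := x) (y := b)).lt_or_eq with h' | h'
        · exact h'
        · exfalso
          rw [← h'] at hcase h
          have : dist x a = 0 := le_antisymm (by push_cast at h ⊢; linarith) dist_nonneg
          rw [this] at hcase
          push_cast at hcase; nlinarith
      obtain ⟨γ, hγ0, hγr, hγd⟩ := hX x a
      set r := dist x a with hrdef
      set R := dist x b with hRdef
      set s : ℝ := ((n:ℝ) + 1) * R with hsdef
      have hs0 : 0 ≤ s := by positivity
      have hsr : s ≤ r := le_of_lt hcase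
      set p := γ s with hpdef
      have hmem0 : (0:ℝ) ∈ Set.Icc (0:ℝ) r := ⟨le_refl 0, dist_nonneg⟩
      have hmems : s ∈ Set.Icc (0:ℝ) r := ⟨hs0, hsr⟩
      have hmemr : r ∈ Set.Icc (0:ℝ) r := ⟨dist_nonneg, le_refl r⟩
      have hxp : dist x p = s := by
        have := hγd 0 hmem0 s hmems
        rw [hγ0] at this
        rw [this, abs_of_nonpos (by linarith)]; ring
      have hpa : dist p a = r - s := by
        have := hγd s hmems r hmemr
        rw [hγr] at this
        rw [this, abs_of_nonpos (by linarith)]; ring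
      have h1 : dist p a ≤ R := by
        rw [hpa]; push_cast at h; linarith
      have h2 : R ≤ dist p x := by
        rw [dist_comm, hxp, hsdef]; nlinarith [Nat.cast_nonneg (α := ℝ) n]
      have W1 := W p a x (h1.trans h2)
      have ihx := ih x p b (by rw [hxp])
      calc dist (f x) (f a) ≤ dist (f x) (f p) + dist (f p) (f a) := dist_triangle _ _ _
        _ ≤ dist (f x) (f p) + H * dist (f p) (f x) := by linarith
        _ = (1 + H) * dist (f x) (f p) := by rw [dist_comm (f p) (f x)]; ring
        _ ≤ (1 + H) * (H * (1+H)^n * dist (f x) (f b)) := by nlinarith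
        _ = H * (1+H)^(n+1) * dist (f x) (f b) := by ring

lemma qs_small {X Y : Type*} [MetricSpace X] [MetricSpace Y]
    (hY : IsGeodesicSpace Y) (f : X ≃ₜ Y) {H : ℝ} (hH : 1 ≤ H)
    (W : ∀ x a b : X, dist x a ≤ dist x b → dist (f x) (f a) ≤ H * dist (f x) (f b))
    {ε : ℝ} (hε : 0 < ε) (m : ℕ) (hm : 2 * H < ε * m)
    (x a b : X) (hxb : x ≠ b) (hρ : ε * dist (f x) (f b) ≤ dist (f x) (f a)) :
    dist x b ≤ 2 ^ m * dist x a := by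
  have hD : 0 < dist (f x) (f b) := dist_pos.2 fun h => hxb (f.injective h)
  have hρpos : 0 < dist (f x) (f a) := lt_of_lt_of_le (by positivity) hρ
  have hxa : x ≠ a := fun h => (dist_pos.1 hρpos) (by rw [h])
  have hr : 0 < dist x a := dist_pos.2 hxa
  have hm0 : 0 < (m:ℝ) := by nlinarith
  have hm1 : 1 ≤ m := Nat.cast_pos.1 hm0
  obtain ⟨σ, hσ0, hσD, hσd⟩ := hY (f x) (f b)
  set D := dist (f x) (f b) with hDdef
  set r := dist x a with hrdef
  set d : ℝ := D / m with hddef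
  have hd : 0 < d := div_pos hD hm0
  have hmd : (m:ℝ) * d = D := by rw [hddef, mul_div_assoc', mul_div_cancel_left₀ _ hm0.ne']
  set u : ℕ → X := fun i => f.symm (σ (i * d)) with hudef
  have hfu : ∀ i, f (u i) = σ (i * d) := fun i => f.apply_symm_apply _
  have hmem : ∀ i : ℕ, i ≤ m → ((i:ℝ) * d) ∈ Set.Icc (0:ℝ) D := by
    intro i hi
    constructor
    · positivity
    · rw [← hmd]
      exact mul_le_mul_of_nonneg_right (Nat.cast_le.2 hi) hd.le
  have hum : u m = b := by
    simp only [hudef, hmd, hσD]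
    exact f.symm_apply_apply b
  have hfxu : ∀ i : ℕ, i ≤ m → dist (f x) (f (u i)) = i * d := by
    intro i hi
    rw [hfu, ← hσ0]
    rw [hσd 0 ⟨le_refl 0, hD.le⟩ (i * d) (hmem i hi)]
    rw [abs_of_nonpos (by nlinarith [(hmem i hi).1])]
    ring
  have hgap : ∀ i : ℕ, i + 1 ≤ m → dist (f (u i)) (f (u (i+1))) = d := by
    intro i hi
    rw [hfu, hfu]
    rw [hσd ((i:ℝ) * d) (hmem i (by omega)) (((i+1:ℕ):ℝ) * d) (hmem (i+1) hi)]
    push_cast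
    rw [abs_of_nonpos (by nlinarith)]
    ring
  -- Step 1
  have step1 : dist x (u 1) < dist x a := by
    by_contra hcon
    push_neg at hcon
    have hw := W x a (u 1) hcon
    rw [hfxu 1 hm1] at hw
    push_cast at hw
    nlinarith [mul_lt_mul_of_pos_right hm hd]
  -- Step 2
  have step2 : ∀ i : ℕ, 1 ≤ i → i + 1 ≤ m →
      dist (u i) (u (i+1)) < dist (u i) x + dist x a := by
    intro i hi1 him
    by_cases hiH : (i:ℝ) ≤ H
    · by_contra hcon
      push_neg at hcon
      have hcmp : dist (u i) a ≤ dist (u i) (u (i+1)) :=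
        le_trans (dist_triangle (u i) x a) hcon
      have hw := W (u i) a (u (i+1)) hcmp
      rw [hgap i him] at hw
      have h1 : dist (f x) (f a) ≤ i * d + H * d := by
        calc dist (f x) (f a) ≤ dist (f x) (f (u i)) + dist (f (u i)) (f a) :=
              dist_triangle _ _ _
          _ ≤ i * d + H * d := by
              rw [hfxu i (by omega)]; linarith
      nlinarith [mul_lt_mul_of_pos_right hm hd, mul_le_mul_of_nonneg_right hiH hd.le]
    · push_neg at hiH
      by_contra hcon
      push_neg at hcon
      have hcmp : dist (u i) x ≤ dist (u i) (u (i+1)) :=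
        le_trans (le_add_of_nonneg_right dist_nonneg) hcon
      have hw := W (u i) x (u (i+1)) hcmp
      rw [hgap i him, dist_comm (f (u i)) (f x), hfxu i (by omega)] at hw
      nlinarith [mul_lt_mul_of_pos_right hiH hd]
  -- Step 3
  have step3 : ∀ i : ℕ, 1 ≤ i → i ≤ m → dist x (u i) ≤ (2 ^ i - 1) * r := by
    intro i hi
    induction i, hi using Nat.le_induction with
    | base =>
      intro _
      norm_num
      exact step1.le
    | succ i hi1 ih =>
      intro him
      have hih := ih (by omega)
      have h2 := step2 i hi1 him
      have h3 : dist x (u (i+1)) ≤ dist x (u i) + dist (u i) (u (i+1)) := dist_triangle _ _ _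
      rw [dist_comm (u i) x] at h2
      have hpow : (1:ℝ) ≤ 2 ^ i := by
        have := Nat.one_le_two_pow (n := i); exact_mod_cast this
      calc dist x (u (i+1)) ≤ 2 * dist x (u i) + r := by linarith
        _ ≤ 2 * ((2 ^ i - 1) * r) + r := by nlinarith
        _ = (2 ^ (i+1) - 1) * r := by ring
  calc dist x b = dist x (u m) := by rw [hum]
    _ ≤ (2 ^ m - 1) * r := step3 m hm1 le_rfl
    _ ≤ 2 ^ m * r := by nlinarith [hr.le]


/-- Theorem 3.3: on geodesic metric spaces, a homeomorphism is weakly quasisymmetric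
iff it is quasisymmetric. -/
theorem weakly_quasisymmetric_iff_quasisymmetric {X Y : Type*} [MetricSpace X] [MetricSpace Y]
    (hX : IsGeodesicSpace X) (hY : IsGeodesicSpace Y) (f : X ≃ₜ Y) :
    (∃ H : ℝ, 1 ≤ H ∧ ∀ x a b : X, dist x a ≤ dist x b →
        dist (f x) (f a) ≤ H * dist (f x) (f b)) ↔
      (∃ η : ℝ → ℝ, η 0 = 0 ∧ StrictMonoOn η (Set.Ici 0) ∧
        ContinuousOn η (Set.Ici 0) ∧ Set.SurjOn η (Set.Ici 0) (Set.Ici 0) ∧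
        ∀ x a b : X, x ≠ a → a ≠ b → x ≠ b →
          dist (f x) (f a) / dist (f x) (f b) ≤ η (dist x a / dist x b)) := by
  constructor
  · rintro ⟨H, hH, W⟩
    refine ⟨qsGauge H, qsGauge_zero H, qsGauge_strictMono hH, qsGauge_continuousOn H,
      qsGauge_surjOn hH, ?_⟩
    intro x a b hxa hab hxb
    have hr : 0 < dist x a := dist_pos.2 hxa
    have hR : 0 < dist x b := dist_pos.2 hxb
    have hD : 0 < dist (f x) (f b) := dist_pos.2 fun h => hxb (f.injective h)
    set t : ℝ := dist x a / dist x b with htdef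
    have ht0 : 0 < t := by positivity
    have hrt : dist x a = t * dist x b := by
      rw [htdef]; field_simp
    rcases le_or_gt (1/4 : ℝ) t with hbig | hnotbig
    · -- big scales : chain lemma
      have harg : dist x a ≤ ((⌈t⌉₊ : ℝ) + 1) * dist x b := by
        rw [hrt]
        have h1 : t ≤ (⌈t⌉₊ : ℝ) + 1 := le_trans (Nat.le_ceil t) (by linarith)
        nlinarith
      have hchain := qs_chain hX f hH W ⌈t⌉₊ x a b harg
      rw [div_le_iff₀ hD]
      exact le_trans hchain (mul_le_mul_of_nonneg_right (qsGauge_ge_big hH hbig) hD.le)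
    · rcases le_or_gt (1/64 : ℝ) t with hmid | hsmall
      · -- middle scales
        have hrR : dist x a ≤ dist x b := by
          rw [hrt]; nlinarith
        have hw := W x a b hrR
        rw [div_le_iff₀ hD]
        exact le_trans hw (mul_le_mul_of_nonneg_right (qsGauge_ge_mid hH hmid) hD.le)
      · -- small scales
        set l2 := Real.log 2 with hl2def
        set L := Real.log (1/t) with hLdef
        have hl2u : l2 < 0.6931472 := by
          have := Real.log_two_lt_d9; rw [hl2def]; linarith
        have hl2l : 0.6931471 < l2 := by
          have := Real.log_two_gt_d9; rw [hl2def]; linarith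
        have hinv : (64:ℝ) < 1/t := by
          rw [lt_div_iff₀ ht0]; linarith
        have hL : 6*l2 ≤ L := by
          have h64 : Real.log 64 ≤ L := Real.log_le_log (by norm_num) hinv.le
          have : Real.log 64 = 6 * l2 := by
            rw [show (64:ℝ) = 2^(6:ℕ) by norm_num, Real.log_pow]
            push_cast; ring
          linarith
        have dL : 0 < L - 2*l2 := by nlinarith
        set ε : ℝ := 4*H*l2 / (L - 2*l2) with hεdef
        have hε : 0 < ε := by
          have hH0 : (0:ℝ) < H := by linarith
          rw [hεdef]; positivity
        set m : ℕ := ⌈2*H/ε⌉₊ + 1 with hmdef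
        have hm : 2*H < ε * m := by
          have h1 : 2*H/ε ≤ (⌈2*H/ε⌉₊ : ℝ) := Nat.le_ceil _
          have h2 : (m:ℝ) = (⌈2*H/ε⌉₊ : ℝ) + 1 := by rw [hmdef]; push_cast; ring
          have h3 : 2*H/ε + 1 ≤ (m:ℝ) := by rw [h2]; linarith
          have h4 := mul_le_mul_of_nonneg_left h3 hε.le
          have h5 : ε * (2*H/ε + 1) = 2*H + ε := by field_simp
          linarith
        have h2m : 2^m * dist x a < dist x b := by
          have hceil : (⌈2*H/ε⌉₊ : ℝ) < 2*H/ε + 1 := Nat.ceil_lt_add_one (by positivity)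
          have hmlt : (m:ℝ) < 2*H/ε + 2 := by rw [hmdef]; push_cast; linarith
          have h2Hε : 2*H/ε = (L - 2*l2)/(2*l2) := by
            rw [hεdef]
            have hH0 : (0:ℝ) < H := by linarith
            field_simp
            ring
          have hml2 : (m:ℝ)*l2 < L := by
            rw [h2Hε] at hmlt
            have hq : ((L - 2*l2)/(2*l2)) * (2*l2) = L - 2*l2 :=
              div_mul_cancel₀ _ (by linarith : (2*l2) ≠ 0)
            nlinarith [mul_lt_mul_of_pos_right hmlt (by linarith : (0:ℝ) < 2*l2)]
          have hexp : (2:ℝ)^m < 1/t := by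
            have he1 : (2:ℝ)^m = Real.exp ((m:ℝ) * l2) := by
              rw [hl2def, Real.exp_nat_mul, Real.exp_log (by norm_num : (0:ℝ) < 2)]
            have he2 : Real.exp ((m:ℝ)*l2) < Real.exp L := Real.exp_lt_exp.2 hml2
            rw [hLdef, Real.exp_log (by positivity)] at he2
            rw [he1]; exact he2
          have h5 : (1/t) * dist x a = dist x b := by
            rw [htdef, one_div, inv_div, div_mul_cancel₀ _ hr.ne']
          calc 2^m * dist x a < (1/t) * dist x a :=
                mul_lt_mul_of_pos_right hexp hr
            _ = dist x b := h5
        have hnb : ¬ (ε * dist (f x) (f b) ≤ dist (f x) (f a)) := by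
          intro hcon
          have := qs_small hY f hH W hε m hm x a b hxb hcon
          linarith
        push_neg at hnb
        have hfin : dist (f x) (f a) / dist (f x) (f b) ≤ ε := by
          rw [div_le_iff₀ hD]
          nlinarith
        exact le_trans hfin (qsGauge_ge_small hH ht0 hsmall)
  · rintro ⟨η, hη0, hmono, hcont, hsurj, hbound⟩
    refine ⟨max (η 1) 1, le_max_right _ _, ?_⟩
    intro x a b hdab
    by_cases hxa : x = a
    · subst hxa
      simp only [dist_self]
      positivity
    by_cases hxb : x = b
    · subst hxb
      have : dist x a = 0 := le_antisymm (by simpa using hdab) dist_nonneg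
      have hax : a = x := by rwa [dist_eq_zero, eq_comm] at this
      subst hax
      simp
    by_cases habeq : a = b
    · subst habeq
      have hD : 0 ≤ dist (f x) (f a) := dist_nonneg
      nlinarith [le_max_right (η 1) (1:ℝ)]
    · have hR : 0 < dist x b := dist_pos.2 hxb
      have hD : 0 < dist (f x) (f b) := dist_pos.2 fun h => hxb (f.injective h)
      have hb := hbound x a b hxa habeq hxb
      have ht1 : dist x a / dist x b ≤ 1 := by
        rw [div_le_one hR]; exact hdab
      have ht00 : 0 ≤ dist x a / dist x b := by positivity
      have hmo : η (dist x a / dist x b) ≤ η 1 :=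
        hmono.monotoneOn (Set.mem_Ici.2 ht00) (Set.mem_Ici.2 zero_le_one) ht1
      have : dist (f x) (f a) / dist (f x) (f b) ≤ η 1 := le_trans hb hmo
      rw [div_le_iff₀ hD] at this
      have hm1 : η 1 ≤ max (η 1) 1 := le_max_left _ _
      nlinarith
end

section
/- Let X be a metric space, x, a, b ∈ X with a ≠ x, and suppose points b_0 = b, …, b_{s-1} satisfy d(b_i, x) = 3^{-i}·d(b,x), and s ≥ 2 is such that 3^{-s}·d(b,x) ≤ d(a,x) ≤ 3^{-(s-1)}·d(b,x). Then for all 0 ≤ i < j ≤ s−1, d(b_j, a) ≤ d(b_i, b_j). -/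
/-- Inequality (3.3.5): with `d(b_i,x) = 3^{-i}·d(b,x)` and
`3^{-s}·d(b,x) ≤ d(a,x) ≤ 3^{-(s-1)}·d(b,x)`, for `i < j ≤ s-1` one has
`d(b_j, a) ≤ d(b_i, b_j)`. -/
theorem dist_to_target_le_dist_chain {X : Type*} [MetricSpace X]
    (b x a : X) (hax : a ≠ x) (s : ℕ) (hs : 2 ≤ s) (bb : ℕ → X) (hb0 : bb 0 = b)
    (hdist : ∀ i < s, dist (bb i) x = (3 : ℝ)⁻¹ ^ i * dist b x)
    (hlow : (3 : ℝ)⁻¹ ^ s * dist b x ≤ dist a x)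
    (hhigh : dist a x ≤ (3 : ℝ)⁻¹ ^ (s - 1) * dist b x) :
    ∀ i j : ℕ, i < j → j < s → dist (bb j) a ≤ dist (bb i) (bb j) := by
  intro i j hij hjs
  have hd : (0:ℝ) ≤ dist b x := dist_nonneg
  have hbi := hdist i (hij.trans hjs)
  have hbj := hdist j hjs
  have hjle : j ≤ s - 1 := Nat.le_sub_one_of_lt hjs
  have h1 : (3:ℝ)⁻¹ ^ (s-1) ≤ (3:ℝ)⁻¹ ^ j :=
    pow_le_pow_of_le_one (by norm_num) (by norm_num) hjle
  have h2 : (3:ℝ)⁻¹ ^ j ≤ (3:ℝ)⁻¹ ^ (i+1) :=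
    pow_le_pow_of_le_one (by norm_num) (by norm_num) hij
  have h2' : 3 * (3:ℝ)⁻¹ ^ j ≤ (3:ℝ)⁻¹ ^ i := by
    rw [pow_succ] at h2; nlinarith [pow_nonneg (by norm_num : (0:ℝ) ≤ 3⁻¹) j]
  have tri1 : dist (bb j) a ≤ dist (bb j) x + dist a x := by
    rw [dist_comm a x]; exact dist_triangle _ _ _
  have tri2 : dist (bb i) x ≤ dist (bb i) (bb j) + dist (bb j) x :=
    dist_triangle _ _ _
  nlinarith [mul_le_mul_of_nonneg_right h1 hd, mul_le_mul_of_nonneg_right h2' hd]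
end

section
/- Let X be a geodesic metric space and f : X → Y a weakly H-quasisymmetric homeomorphism into a geodesic metric space Y. For distinct x, a, b ∈ X with t = d_X(x,a)/d_X(x,b) ≤ 1/3, set t' = d_Y(f(x),f(a))/d_Y(f(x),f(b)) and s_0(t) = log(1/t)/log 3. Then t' ≤ 2H/(s_0(t) − 1) whenever s_0(t) > 1; in particular t' → 0 as t → 0. -/
set_option maxHeartbeats 1000000 in
private lemma wqs_aux {X Y : Type*} [MetricSpace X] [MetricSpace Y]
    (hX : IsGeodesicSpace X) (hY : IsGeodesicSpace Y)
    (f : X ≃ₜ Y) (H : ℝ) (hH : 1 ≤ H)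
    (hwqs : ∀ x y z : X, dist x y ≤ dist x z →
      dist (f x) (f y) ≤ H * dist (f x) (f z)) :
    ∀ x a b : X, x ≠ a → x ≠ b → a ≠ b →
      dist x a / dist x b ≤ 1 / 3 →
      1 < Real.log (1 / (dist x a / dist x b)) / Real.log 3 →
      dist (f x) (f a) / dist (f x) (f b) ≤
        2 * H / (Real.log (1 / (dist x a / dist x b)) / Real.log 3 - 1) := by
  intro x a b hxa hxb hab ht hs
  set d : ℝ := dist x a with hd_def
  set B : ℝ := dist x b with hB_def
  set s₀ : ℝ := Real.log (1 / (d / B)) / Real.log 3 with hs0_def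
  have hd : 0 < d := dist_pos.mpr hxa
  have hB : 0 < B := dist_pos.mpr hxb
  have hH0 : (0 : ℝ) < H := lt_of_lt_of_le one_pos hH
  have hfxb : f x ≠ f b := fun h => hxb (f.injective h)
  set D : ℝ := dist (f x) (f b) with hD_def
  have hD : 0 < D := dist_pos.mpr hfxb
  have hlog3 : (0:ℝ) < Real.log 3 := Real.log_pos (by norm_num)
  -- choose n
  set n : ℕ := ⌈s₀⌉₊ - 1 with hn_def
  have hceil : 1 < ⌈s₀⌉₊ := Nat.lt_ceil.mpr (by exact_mod_cast hs)
  have hn1 : 1 ≤ n := by omega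
  have hncast : (n : ℝ) + 1 = (⌈s₀⌉₊ : ℝ) := by exact_mod_cast (by omega : n + 1 = ⌈s₀⌉₊)
  have hs0pos : (0:ℝ) < s₀ := lt_trans one_pos hs
  have hns : (n : ℝ) < s₀ := by
    have := Nat.ceil_lt_add_one hs0pos.le
    linarith
  have hsn : s₀ - 1 ≤ (n : ℝ) := by
    have := Nat.le_ceil s₀
    linarith
  -- 3^n * d ≤ B
  have h3n : (3:ℝ)^n * d ≤ B := by
    have hnl : (n:ℝ) * Real.log 3 ≤ Real.log (1 / (d / B)) := by
      rw [hs0_def, lt_div_iff₀ hlog3] at hns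
      linarith
    have hpos : (0:ℝ) < 1 / (d / B) := by positivity
    have : (3:ℝ)^n ≤ 1 / (d / B) := by
      calc (3:ℝ)^n = Real.exp ((n:ℝ) * Real.log 3) := by
            rw [Real.exp_nat_mul, Real.exp_log (by norm_num : (0:ℝ) < 3)]
        _ ≤ Real.exp (Real.log (1 / (d / B))) := Real.exp_le_exp.mpr hnl
        _ = 1 / (d / B) := Real.exp_log hpos
    rw [one_div_div] at this
    calc (3:ℝ)^n * d ≤ (B / d) * d := by nlinarith
      _ = B := by field_simp
  have h1pow : ∀ j : ℕ, (1:ℝ) ≤ 3^j := fun j => one_le_pow₀ (by norm_num)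
  have hdB : d ≤ B := by
    calc d = 1 * d := (one_mul d).symm
      _ ≤ 3^n * d := by nlinarith [h1pow n]
      _ ≤ B := h3n
  clear_value d B s₀ D n
  -- geodesic in Y
  obtain ⟨γ, hγ0, hγD, hγiso⟩ := hY (f x) (f b)
  rw [← hD_def] at hγD hγiso
  -- continuity
  have hγcont : ContinuousOn γ (Set.Icc 0 D) := by
    apply LipschitzOnWith.continuousOn (K := 1)
    intro u hu v hv
    rw [edist_dist, edist_dist, hγiso u hu v hv]
    simp [Real.dist_eq]
  have hhcont : ContinuousOn (fun u => dist x (f.symm (γ u))) (Set.Icc 0 D) :=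
    (continuous_const.dist f.symm.continuous).comp_continuousOn hγcont
  have h0 : dist x (f.symm (γ 0)) = 0 := by
    rw [hγ0, Homeomorph.symm_apply_apply, dist_self]
  have hDval : dist x (f.symm (γ D)) = B := by
    rw [hγD, Homeomorph.symm_apply_apply, hB_def]
  -- key induction
  have key : ∀ j : ℕ, j ≤ n → ∃ u, u ∈ Set.Icc (0:ℝ) D ∧
      dist x (f.symm (γ u)) = 3^j * d ∧ (j : ℝ) * (dist (f x) (f a) / (2*H)) ≤ u := by
    intro j
    induction j with
    | zero =>
      intro _
      have hmem : d ∈ Set.Icc (dist x (f.symm (γ 0))) (dist x (f.symm (γ D))) := by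
        rw [h0, hDval]; exact ⟨hd.le, hdB⟩
      obtain ⟨u, hu, hval⟩ := intermediate_value_Icc hD.le hhcont hmem
      exact ⟨u, hu, by simpa using hval, by simpa using hu.1⟩
    | succ j ih =>
      intro hj
      obtain ⟨u, hu, hval, hlb⟩ := ih (by omega)
      have hpowj : (0:ℝ) < 3^j := by positivity
      have hcontsub : ContinuousOn (fun u => dist x (f.symm (γ u))) (Set.Icc u D) :=
        hhcont.mono (Set.Icc_subset_Icc hu.1 le_rfl)
      have hmem : (3:ℝ)^(j+1) * d ∈
          Set.Icc (dist x (f.symm (γ u))) (dist x (f.symm (γ D))) := by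
        rw [hval, hDval]
        have e1 : (3:ℝ)^j ≤ 3^(j+1) := pow_le_pow_right₀ (by norm_num) (by omega)
        have e2 : (3:ℝ)^(j+1) ≤ 3^n := pow_le_pow_right₀ (by norm_num) hj
        exact ⟨by nlinarith, by nlinarith [h3n]⟩
      obtain ⟨u', hu', hval'⟩ := intermediate_value_Icc hu.2 hcontsub hmem
      simp only at hval'
      have hu'mem : u' ∈ Set.Icc (0:ℝ) D := ⟨le_trans hu.1 hu'.1, hu'.2⟩
      set w : X := f.symm (γ u) with hw_def
      set w' : X := f.symm (γ u') with hw'_def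
      clear_value w w'
      have hww' : 2 * (3^j * d) ≤ dist w w' := by
        have htri : dist x w' - dist x w ≤ dist w w' := by
          have := dist_triangle x w w'
          linarith
        have h31 : (3:ℝ)^(j+1) = 3 * 3^j := by ring
        rw [hval, hval', h31] at htri
        linarith
      have hwx : dist w x = 3^j * d := by rw [dist_comm]; exact hval
      have h1 : dist w x ≤ dist w w' := by
        rw [hwx]; nlinarith [mul_pos hpowj hd]
      have h2 : dist w a ≤ dist w w' := by
        have t := dist_triangle w x a
        have := h1pow j
        nlinarith [mul_pos hpowj hd]
      have q1 := hwqs w x w' h1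
      have q2 := hwqs w a w' h2
      have hfw : f w = γ u := by rw [hw_def]; exact f.apply_symm_apply _
      have hfw' : f w' = γ u' := by rw [hw'_def]; exact f.apply_symm_apply _
      have hdistY : dist (f w) (f w') = u' - u := by
        have hnn : (0:ℝ) ≤ u' - u := by linarith [hu'.1]
        rw [hfw, hfw', hγiso u hu u' hu'mem, abs_sub_comm, abs_of_nonneg hnn]
      have hsep : dist (f x) (f a) ≤ 2 * H * (u' - u) := by
        have t1 := dist_triangle (f x) (f w) (f a)
        rw [hdistY] at q1 q2
        rw [dist_comm (f x) (f w)] at t1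
        linarith
      refine ⟨u', hu'mem, by rw [hw'_def] at hval'; exact hval', ?_⟩
      have hgap : dist (f x) (f a) / (2*H) ≤ u' - u := by
        rw [div_le_iff₀ (by linarith : (0:ℝ) < 2*H)]
        linarith [hsep]
      push_cast
      linarith
  -- conclude
  obtain ⟨u, hu, -, hlb⟩ := key n le_rfl
  have hfinal : (n:ℝ) * (dist (f x) (f a) / (2*H)) ≤ D := le_trans hlb hu.2
  have hnda : (n:ℝ) * dist (f x) (f a) ≤ D * (2*H) := by
    have h2H : (0:ℝ) < 2*H := by linarith
    rw [← mul_div_assoc] at hfinal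
    exact (div_le_iff₀ h2H).mp hfinal
  rw [div_le_div_iff₀ hD (by linarith : (0:ℝ) < s₀ - 1)]
  have hda0 : 0 ≤ dist (f x) (f a) := dist_nonneg
  nlinarith [mul_le_mul_of_nonneg_left hsn hda0, hnda]


/-- Small-ratio estimate (Case 2 of Theorem 3.3): if `t = d(x,a)/d(x,b) ≤ 1/3` and
`s₀(t) = log(1/t)/log 3 > 1`, then `t' = d(f x,f a)/d(f x,f b) ≤ 2H/(s₀(t) − 1)`. -/
theorem weakly_qs_small_ratio_estimate {X Y : Type*} [MetricSpace X] [MetricSpace Y]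
    (hX : IsGeodesicSpace X) (hY : IsGeodesicSpace Y)
    (f : X ≃ₜ Y) (H : ℝ) (hH : 1 ≤ H)
    (hwqs : ∀ x y z : X, dist x y ≤ dist x z →
      dist (f x) (f y) ≤ H * dist (f x) (f z)) :
    ∀ x a b : X, x ≠ a → x ≠ b → a ≠ b →
      dist x a / dist x b ≤ 1 / 3 →
      1 < Real.log (1 / (dist x a / dist x b)) / Real.log 3 →
      dist (f x) (f a) / dist (f x) (f b) ≤
        2 * H / (Real.log (1 / (dist x a / dist x b)) / Real.log 3 - 1) :=
  wqs_aux hX hY f H hH hwqs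
end

section
/- Let X be a metric space, Y a metric space, f : X → Y uniformly continuous, and suppose there is a family G of self-maps of X and a constant c ≥ 1, μ ∈ (0,1] with d(A(u),A(v)) ≤ c·max{d(u,v), d(u,v)^μ} for all A ∈ G and u,v ∈ X. If x_0, u ∈ X are joined by a chain x_0 = y_0, y_1, …, y_m = u with d(y_{i−1}, y_i) < (δ/(Tc))^{1/μ} for all i (where δ comes from uniform continuity at ε = 1 and T ≥ 1 with δ < Tc), then sup_{A ∈ G} d_Y(f(A(u)), f(A(x_0))) ≤ m. -/
/-- Boundedness-of-orbits argument from Theorem 1.2(ii): uniform continuity of `f`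
plus uniform distortion control on the family `G` bounds `d(f(A u), f(A x₀))` by the
length `m` of a fine chain joining `x₀` to `u`. -/
theorem orbit_bound_of_uniform_continuity {X Y : Type*} [MetricSpace X] [MetricSpace Y]
    (f : X → Y) (G : Set (X → X)) (c μ δ T : ℝ)
    (hc : 1 ≤ c) (hμ0 : 0 < μ) (hμ1 : μ ≤ 1)
    (hG : ∀ A ∈ G, ∀ u v : X,
      dist (A u) (A v) ≤ c * max (dist u v) (dist u v ^ μ))
    (hδ : 0 < δ)
    (huc : ∀ x y : X, dist x y < δ → dist (f x) (f y) < 1)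
    (hT : 1 ≤ T) (hδT : δ < T * c)
    (x₀ u : X) (m : ℕ) (y : ℕ → X) (hy0 : y 0 = x₀) (hym : y m = u)
    (hchain : ∀ i : ℕ, 1 ≤ i → i ≤ m →
      dist (y (i - 1)) (y i) < (δ / (T * c)) ^ (1 / μ)) :
    ∀ A ∈ G, dist (f (A u)) (f (A x₀)) ≤ m := by
  intro A hA
  have hTc : (0 : ℝ) < T * c := by positivity
  have hq : δ / (T * c) < 1 := (div_lt_one hTc).2 hδT
  have hq0 : 0 ≤ δ / (T * c) := by positivity
  -- each chain step: images under A are within δ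
  have hstep : ∀ i : ℕ, 1 ≤ i → i ≤ m → dist (f (A (y (i - 1)))) (f (A (y i))) < 1 := by
    intro i h1 hm
    apply huc
    have hd := hchain i h1 hm
    set d := dist (y (i - 1)) (y i) with hdd
    have hd0 : 0 ≤ d := dist_nonneg
    have hdμ : d ^ μ < δ / (T * c) := by
      have := Real.rpow_lt_rpow hd0 hd hμ0
      rwa [← Real.rpow_mul hq0, one_div_mul_cancel hμ0.ne', Real.rpow_one] at this
    have hd1 : d ≤ 1 := by
      have : (δ / (T * c)) ^ (1 / μ) ≤ 1 :=
        Real.rpow_le_one hq0 hq.le (by positivity)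
      linarith
    have hle : d ≤ d ^ μ := by
      rcases eq_or_lt_of_le hd0 with h0 | h0
      · rw [← h0, Real.zero_rpow hμ0.ne']
      · calc d = d ^ (1 : ℝ) := (Real.rpow_one d).symm
          _ ≤ d ^ μ := Real.rpow_le_rpow_of_exponent_ge h0 hd1 hμ1
    have hmax : max d (d ^ μ) = d ^ μ := max_eq_right hle
    calc dist (A (y (i - 1))) (A (y i)) ≤ c * max d (d ^ μ) := hG A hA _ _
      _ = c * d ^ μ := by rw [hmax]
      _ < c * (δ / (T * c)) := by
          exact (mul_lt_mul_iff_right₀ (by linarith)).2 hdμ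
      _ = δ / T := by field_simp
      _ ≤ δ := by
          rw [div_le_iff₀ (by linarith)]
          nlinarith
  -- induction along the chain
  have key : ∀ n : ℕ, n ≤ m → dist (f (A (y n))) (f (A (y 0))) ≤ n := by
    intro n
    induction n with
    | zero => intro _; simp
    | succ k ih =>
      intro hkm
      have h1 := ih (Nat.le_of_succ_le hkm)
      have h2 := hstep (k + 1) (Nat.le_add_left 1 k) hkm
      simp only [Nat.add_sub_cancel] at h2
      calc dist (f (A (y (k + 1)))) (f (A (y 0)))
          ≤ dist (f (A (y (k + 1)))) (f (A (y k))) + dist (f (A (y k))) (f (A (y 0))) :=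
            dist_triangle _ _ _
        _ ≤ 1 + k := by rw [dist_comm] at h2; linarith
        _ = (k + 1 : ℕ) := by push_cast; ring
  have := key m le_rfl
  rwa [hym, hy0] at this
end

section
/- Let F ⊆ C(X,Y) be a family of continuous maps between metric spaces that is uniformly ω-continuous on every compact subset of X, where X is locally compact. Then F is locally uniformly ω-continuous: for each x_0 ∈ X there exist r, L > 0 such that d_Y(f(x),f(y)) ≤ L·ω(d_X(x,y)) for all x, y ∈ B(x_0, r) and all f ∈ F. Conversely, if F is locally uniformly ω-continuous and X is a length (or geodesic) space, then F is uniformly ω-continuous on compact sets. -/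
/-- A geodesic space is path connected (any two points are joined). -/
lemma IsGeodesicSpace.joined {X : Type*} [MetricSpace X] (hgeo : IsGeodesicSpace X)
    (x y : X) : Joined x y := by
  obtain ⟨γ, hγ0, hγd, hγ⟩ := hgeo x y
  set D := dist x y with hD
  have hD0 : (0 : ℝ) ≤ D := dist_nonneg
  have hlip : LipschitzWith (Real.toNNReal D) (fun t : unitInterval => γ (t.1 * D)) := by
    apply LipschitzWith.of_dist_le_mul
    intro s t
    have hs : s.1 * D ∈ Set.Icc (0 : ℝ) D :=
      ⟨mul_nonneg s.2.1 hD0, by nlinarith [s.2.2]⟩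
    have ht : t.1 * D ∈ Set.Icc (0 : ℝ) D :=
      ⟨mul_nonneg t.2.1 hD0, by nlinarith [t.2.2]⟩
    rw [hγ _ hs _ ht]
    have hdst : dist s t = |s.1 - t.1| := by
      rw [Subtype.dist_eq, Real.dist_eq]
    rw [hdst]
    have : |s.1 * D - t.1 * D| = |s.1 - t.1| * D := by
      rw [← sub_mul, abs_mul, abs_of_nonneg hD0]
    rw [this, Real.coe_toNNReal _ hD0]
    ring_nf
    exact le_refl _
  exact ⟨⟨⟨fun t : unitInterval => γ (t.1 * D), hlip.continuous⟩,
    by simp [hγ0], by simpa using hγd⟩⟩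

/-- Proposition 2.6 of Fletcher–Nicks: for a family of continuous maps on a locally
compact space, uniform ω-continuity on compact sets implies local uniform
ω-continuity; and conversely on a geodesic space. -/
theorem uniformly_omega_continuous_compact_iff_locally {X Y : Type*}
    [MetricSpace X] [MetricSpace Y] [LocallyCompactSpace X]
    (F : Set (X → Y)) (hF : ∀ f ∈ F, Continuous f)
    (ω : ℝ → ℝ) (hωcont : Continuous ω) (hωmono : Monotone ω) (hω0 : ω 0 = 0) :
    ((∀ E : Set X, IsCompact E → ∃ L > (0 : ℝ), ∀ f ∈ F, ∀ x ∈ E, ∀ y ∈ E,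
        dist (f x) (f y) ≤ L * ω (dist x y)) →
      ∀ x₀ : X, ∃ r > (0 : ℝ), ∃ L > (0 : ℝ), ∀ f ∈ F,
        ∀ x ∈ Metric.ball x₀ r, ∀ y ∈ Metric.ball x₀ r,
          dist (f x) (f y) ≤ L * ω (dist x y)) ∧
    (IsGeodesicSpace X →
      (∀ x₀ : X, ∃ r > (0 : ℝ), ∃ L > (0 : ℝ), ∀ f ∈ F,
        ∀ x ∈ Metric.ball x₀ r, ∀ y ∈ Metric.ball x₀ r,
          dist (f x) (f y) ≤ L * ω (dist x y)) →
      ∀ E : Set X, IsCompact E → ∃ L > (0 : ℝ), ∀ f ∈ F, ∀ x ∈ E, ∀ y ∈ E,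
        dist (f x) (f y) ≤ L * ω (dist x y)) := by
  have hωnonneg : ∀ t : ℝ, 0 ≤ t → 0 ≤ ω t := fun t ht => hω0 ▸ hωmono ht
  constructor
  · -- easy direction
    intro h x₀
    obtain ⟨K, hK, hKnhds⟩ := exists_compact_mem_nhds x₀
    obtain ⟨r, hr, hball⟩ := Metric.mem_nhds_iff.1 hKnhds
    obtain ⟨L, hL, hLb⟩ := h K hK
    exact ⟨r, hr, L, hL, fun f hf x hx y hy => hLb f hf x (hball hx) y (hball hy)⟩
  · intro hgeo hloc E hE
    rcases E.eq_empty_or_nonempty with rfl | ⟨x₀, hx₀⟩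
    · exact ⟨1, one_pos, fun f _ x hx => absurd hx (by simp)⟩
    haveI : Nonempty X := ⟨x₀⟩
    haveI : PathConnectedSpace X := ⟨⟨x₀⟩, hgeo.joined⟩
    haveI : PreconnectedSpace X := inferInstance
    -- local data
    choose r hr L hL hB using hloc
    -- finite subcover of E
    have hcov : E ⊆ ⋃ z, Metric.ball z (r z) := fun x _ =>
      Set.mem_iUnion.2 ⟨x, Metric.mem_ball_self (hr x)⟩
    obtain ⟨t, ht⟩ := hE.elim_finite_subcover (fun z => Metric.ball z (r z))
      (fun z => Metric.isOpen_ball) hcov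
    -- Lebesgue number for the finite subcover
    have ht' : E ⊆ ⋃ i : t, Metric.ball i.1 (r i.1) := fun x hx => by
      obtain ⟨z, hz, hmem⟩ := Set.mem_iUnion₂.1 (ht hx)
      exact Set.mem_iUnion.2 ⟨⟨z, hz⟩, hmem⟩
    obtain ⟨δ, hδ, hleb⟩ := lebesgue_number_lemma_of_metric hE
      (fun i : t => Metric.isOpen_ball) ht'
    by_cases hωδ : ω δ ≤ 0
    · -- ω δ = 0 : every f ∈ F is constant
      have hconst : ∀ f ∈ F, ∀ x y : X, f x = f y := by
        intro f hf x y
        have hlc : ∀ z : X, ∀ u ∈ Metric.ball z (min (r z) δ / 2),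
            ∀ v ∈ Metric.ball z (min (r z) δ / 2), f u = f v := by
          intro z u hu v hv
          have hm1 : min (r z) δ ≤ r z := min_le_left _ _
          have hm2 : min (r z) δ ≤ δ := min_le_right _ _
          have hm0 : 0 < min (r z) δ := lt_min (hr z) hδ
          have hu' : dist u z < min (r z) δ / 2 := Metric.mem_ball.1 hu
          have hv' : dist v z < min (r z) δ / 2 := Metric.mem_ball.1 hv
          have huz : u ∈ Metric.ball z (r z) := Metric.mem_ball.2 (by linarith)
          have hvz : v ∈ Metric.ball z (r z) := Metric.mem_ball.2 (by linarith)
          have hduv : dist u v ≤ δ := by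
            have h3 : dist u v ≤ dist u z + dist z v := dist_triangle u z v
            have h4 : dist z v = dist v z := dist_comm z v
            linarith
          have hb := hB z f hf u huz v hvz
          have hle : L z * ω (dist u v) ≤ 0 := by
            have h1 : ω (dist u v) ≤ ω δ := hωmono hduv
            have h2 : L z * ω (dist u v) ≤ L z * ω δ :=
              mul_le_mul_of_nonneg_left h1 (le_of_lt (hL z))
            have h3 : L z * ω δ ≤ 0 := mul_nonpos_of_nonneg_of_nonpos (le_of_lt (hL z)) hωδ
            linarith
          exact dist_le_zero.1 (le_trans hb hle)
        -- clopen argument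
        set S : Set X := {y | f y = f x} with hS
        have hρpos : ∀ z : X, 0 < min (r z) δ / 2 := fun z => by
          have h1 := lt_min (hr z) hδ; linarith
        have hopen : IsOpen S := by
          rw [Metric.isOpen_iff]
          intro z hz
          refine ⟨min (r z) δ / 2, hρpos z, fun u hu => ?_⟩
          have h1 : f u = f z := hlc z u hu z (Metric.mem_ball_self (hρpos z))
          exact show f u = f x from h1.trans hz
        have hclosed : IsClosed S := by
          rw [← isOpen_compl_iff, Metric.isOpen_iff]
          intro z hz
          refine ⟨min (r z) δ / 2, hρpos z, fun u hu hmem => ?_⟩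
          have h1 : f u = f z := hlc z u hu z (Metric.mem_ball_self (hρpos z))
          exact hz (show f z = f x from h1.symm.trans hmem)
        have huniv : S = Set.univ := IsClopen.eq_univ ⟨hclosed, hopen⟩ ⟨x, rfl⟩
        have hy : y ∈ S := huniv ▸ Set.mem_univ y
        exact (show f y = f x from hy).symm
      refine ⟨1, one_pos, fun f hf x hx y hy => ?_⟩
      rw [hconst f hf x y, dist_self]
      have := hωnonneg (dist x y) dist_nonneg
      linarith
    push_neg at hωδ
    -- uniform bound: the set where sup_f dist (f x₀) (f ·) is finite is clopen
    set S : Set X := {x | ∃ M : ℝ, ∀ f ∈ F, dist (f x₀) (f x) ≤ M} with hSdef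
    have hopen : IsOpen S := by
      rw [Metric.isOpen_iff]
      rintro z ⟨M, hM⟩
      refine ⟨r z, hr z, fun u hu => ⟨M + L z * ω (r z), fun f hf => ?_⟩⟩
      have hb := hB z f hf z (Metric.mem_ball_self (hr z)) u hu
      have h1 : ω (dist z u) ≤ ω (r z) := hωmono (le_of_lt (Metric.mem_ball'.1 hu))
      have h2 : L z * ω (dist z u) ≤ L z * ω (r z) :=
        mul_le_mul_of_nonneg_left h1 (le_of_lt (hL z))
      calc dist (f x₀) (f u) ≤ dist (f x₀) (f z) + dist (f z) (f u) := dist_triangle _ _ _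
        _ ≤ M + L z * ω (r z) := add_le_add (hM f hf) (hb.trans h2)
    have hclosed : IsClosed S := by
      rw [← isOpen_compl_iff, Metric.isOpen_iff]
      intro z hz
      refine ⟨r z, hr z, fun u hu hmem => hz ?_⟩
      obtain ⟨M, hM⟩ := hmem
      refine ⟨M + L z * ω (r z), fun f hf => ?_⟩
      have hb := hB z f hf u hu z (Metric.mem_ball_self (hr z))
      have h1 : ω (dist u z) ≤ ω (r z) := hωmono (le_of_lt (Metric.mem_ball.1 hu))
      have h2 : L z * ω (dist u z) ≤ L z * ω (r z) :=
        mul_le_mul_of_nonneg_left h1 (le_of_lt (hL z))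
      calc dist (f x₀) (f z) ≤ dist (f x₀) (f u) + dist (f u) (f z) := dist_triangle _ _ _
        _ ≤ M + L z * ω (r z) := add_le_add (hM f hf) (hb.trans h2)
    have hSuniv : S = Set.univ :=
      IsClopen.eq_univ ⟨hclosed, hopen⟩ ⟨x₀, 0, fun f _ => by simp⟩
    -- uniform bound over each ball of the cover
    have hMex : ∀ z : X, ∃ M : ℝ, ∀ f ∈ F, ∀ u ∈ Metric.ball z (r z),
        dist (f x₀) (f u) ≤ M := by
      intro z
      have hz : z ∈ S := hSuniv ▸ Set.mem_univ z
      obtain ⟨M, hM⟩ := hz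
      refine ⟨M + L z * ω (r z), fun f hf u hu => ?_⟩
      have hb := hB z f hf z (Metric.mem_ball_self (hr z)) u hu
      have h1 : ω (dist z u) ≤ ω (r z) := hωmono (le_of_lt (Metric.mem_ball'.1 hu))
      have h2 : L z * ω (dist z u) ≤ L z * ω (r z) :=
        mul_le_mul_of_nonneg_left h1 (le_of_lt (hL z))
      calc dist (f x₀) (f u) ≤ dist (f x₀) (f z) + dist (f z) (f u) := dist_triangle _ _ _
        _ ≤ M + L z * ω (r z) := add_le_add (hM f hf) (hb.trans h2)
    choose M hM using hMex
    obtain ⟨M0, hM0⟩ := (t.image M).exists_le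
    obtain ⟨L1, hL1⟩ := (t.image L).exists_le
    have hME : ∀ f ∈ F, ∀ x ∈ E, dist (f x₀) (f x) ≤ max M0 0 := by
      intro f hf x hx
      obtain ⟨z, hzt, hz⟩ := Set.mem_iUnion₂.1 (ht hx)
      exact le_trans (hM z f hf x hz) (le_max_of_le_left (hM0 _ (Finset.mem_image_of_mem M hzt)))
    set B := max M0 0 with hBdef
    have hBnn : (0 : ℝ) ≤ B := le_max_right _ _
    obtain ⟨q, hq⟩ : ∃ q : ℝ, q = 2 * B / ω δ := ⟨_, rfl⟩
    have hq0 : (0 : ℝ) ≤ q := by rw [hq]; positivity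
    set Lf : ℝ := max L1 q + 1 with hLf
    have hmaxnn : (0 : ℝ) ≤ max L1 q := le_trans hq0 (le_max_right _ _)
    have hLf0 : 0 < Lf := by rw [hLf]; linarith
    refine ⟨Lf, hLf0, fun f hf x hx y hy => ?_⟩
    by_cases hxy : dist x y < δ
    · obtain ⟨i, hi⟩ := hleb x hx
      have hxi : x ∈ Metric.ball i.1 (r i.1) := hi (Metric.mem_ball_self hδ)
      have hyi : y ∈ Metric.ball i.1 (r i.1) := hi (by simpa [Metric.mem_ball, dist_comm] using hxy)
      have hb := hB i.1 f hf x hxi y hyi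
      have hLi : L i.1 ≤ Lf := by
        have h1 := hL1 _ (Finset.mem_image_of_mem L i.2)
        have h2 : L1 ≤ max L1 q := le_max_left _ _
        rw [hLf]; linarith
      have hωnn := hωnonneg (dist x y) dist_nonneg
      calc dist (f x) (f y) ≤ L i.1 * ω (dist x y) := hb
        _ ≤ Lf * ω (dist x y) := mul_le_mul_of_nonneg_right hLi hωnn
    · push_neg at hxy
      have h2B : dist (f x) (f y) ≤ 2 * B := by
        calc dist (f x) (f y) ≤ dist (f x) (f x₀) + dist (f x₀) (f y) := dist_triangle _ _ _
          _ ≤ B + B := add_le_add (by rw [dist_comm]; exact hME f hf x hx) (hME f hf y hy)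
          _ = 2 * B := by ring
      have hωd : ω δ ≤ ω (dist x y) := hωmono hxy
      have hstep : 2 * B ≤ Lf * ω δ := by
        have h1 : q ≤ Lf := by
          have h2 : q ≤ max L1 q := le_max_right _ _
          rw [hLf]; linarith
        have h3 := mul_le_mul_of_nonneg_right h1 (le_of_lt hωδ)
        rw [hq, div_mul_cancel₀ _ (ne_of_gt hωδ)] at h3
        exact h3
      calc dist (f x) (f y) ≤ 2 * B := h2B
        _ ≤ Lf * ω δ := hstep
        _ ≤ Lf * ω (dist x y) := mul_le_mul_of_nonneg_left hωd (le_of_lt hLf0)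
end

section
/- Let (X, d_X) be a metric space, G a family of bijective self-maps of X such that both A and A^{-1} satisfy d_X(A(u),A(v)) ≤ c·max{d_X(u,v), d_X(u,v)^μ} (c ≥ 1, 0 < μ ≤ 1), and let f : X → Y satisfy: there exist r_0 > 0, x_0 ∈ X, L > 0, α ∈ (0,1] with d_Y(f(A(u)), f(A(v))) ≤ L·d_X(u,v)^α for all A ∈ G and u, v ∈ B(x_0, r_0), and suppose G acts transitively on X. Then f is uniformly continuous: for every ε > 0 there is δ > 0 such that d_X(x,y) < δ implies d_Y(f(x),f(y)) < ε; explicitly δ < min{r_0/(2c), (r_0/(2c))^{1/μ}, (ε/(L c^α))^{1/α}, (ε/(L c^α))^{1/(αμ)}} works. -/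
lemma rpow_lt_of_lt_rpow_inv {d t β : ℝ} (hd : 0 ≤ d) (ht : 0 < t) (hβ : 0 < β)
    (h : d < t ^ (1 / β)) : d ^ β < t := by
  have h2 := Real.rpow_lt_rpow hd h hβ
  rwa [← Real.rpow_mul ht.le, one_div, inv_mul_cancel₀ hβ.ne', Real.rpow_one] at h2

/-- Forward direction of Theorem 1.2(i), abstracted: a transitive family of uniformly
distorted bijections together with a uniform local Hölder bound for `{f ∘ A}` forces
`f` to be uniformly continuous, with an explicit modulus. -/
theorem uniformly_continuous_of_transitive_holder {X Y : Type*}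
    [MetricSpace X] [MetricSpace Y]
    (f : X → Y) (G : Set (X ≃ X)) (c μ : ℝ) (hc : 1 ≤ c) (hμ0 : 0 < μ) (hμ1 : μ ≤ 1)
    (hG : ∀ A ∈ G,
      (∀ u v : X, dist (A u) (A v) ≤ c * max (dist u v) (dist u v ^ μ)) ∧
      (∀ u v : X, dist (A.symm u) (A.symm v) ≤ c * max (dist u v) (dist u v ^ μ)))
    (r₀ : ℝ) (hr₀ : 0 < r₀) (x₀ : X) (L : ℝ) (hL : 0 < L)
    (α : ℝ) (hα0 : 0 < α) (hα1 : α ≤ 1)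
    (hHolder : ∀ A ∈ G, ∀ u ∈ Metric.ball x₀ r₀, ∀ v ∈ Metric.ball x₀ r₀,
      dist (f (A u)) (f (A v)) ≤ L * dist u v ^ α)
    (htrans : ∀ x : X, ∃ A ∈ G, A x₀ = x) :
    (∀ ε > (0 : ℝ), ∃ δ > (0 : ℝ), ∀ x y : X, dist x y < δ → dist (f x) (f y) < ε) ∧
    (∀ ε > (0 : ℝ), ∀ δ : ℝ, 0 < δ →
      δ < min (min (r₀ / (2 * c)) ((r₀ / (2 * c)) ^ (1 / μ)))
              (min ((ε / (L * c ^ α)) ^ (1 / α)) ((ε / (L * c ^ α)) ^ (1 / (α * μ)))) →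
      ∀ x y : X, dist x y < δ → dist (f x) (f y) < ε) := by
  have hc0 : (0 : ℝ) < c := lt_of_lt_of_le one_pos hc
  have hcα : (0 : ℝ) < c ^ α := Real.rpow_pos_of_pos hc0 α
  have hr2c : (0 : ℝ) < r₀ / (2 * c) := by positivity
  have key : ∀ ε > (0 : ℝ), ∀ δ : ℝ, 0 < δ →
      δ < min (min (r₀ / (2 * c)) ((r₀ / (2 * c)) ^ (1 / μ)))
              (min ((ε / (L * c ^ α)) ^ (1 / α)) ((ε / (L * c ^ α)) ^ (1 / (α * μ)))) →
      ∀ x y : X, dist x y < δ → dist (f x) (f y) < ε := by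
    intro ε hε δ hδ0 hδ x y hxy
    have hT : (0 : ℝ) < ε / (L * c ^ α) := by positivity
    obtain ⟨A, hAG, hAx⟩ := htrans x
    obtain ⟨h1, h2⟩ := hG A hAG
    set d := dist x y with hd
    have hd0 : 0 ≤ d := dist_nonneg
    have hd1 : d < r₀ / (2 * c) := lt_of_lt_of_le hxy
      (hδ.le.trans ((min_le_left _ _).trans (min_le_left _ _)))
    have hd2 : d ^ μ < r₀ / (2 * c) := rpow_lt_of_lt_rpow_inv hd0 hr2c hμ0
      (lt_of_lt_of_le hxy (hδ.le.trans ((min_le_left _ _).trans (min_le_right _ _))))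
    have hd3 : d ^ α < ε / (L * c ^ α) := rpow_lt_of_lt_rpow_inv hd0 hT hα0
      (lt_of_lt_of_le hxy (hδ.le.trans ((min_le_right _ _).trans (min_le_left _ _))))
    have hd4 : (d ^ μ) ^ α < ε / (L * c ^ α) := by
      rw [← Real.rpow_mul hd0, mul_comm]
      exact rpow_lt_of_lt_rpow_inv hd0 hT (by positivity)
        (lt_of_lt_of_le hxy (hδ.le.trans ((min_le_right _ _).trans (min_le_right _ _))))
    set v := A.symm y with hv
    have hxv : dist x₀ v < r₀ / 2 := by
      have : dist x₀ v = dist (A.symm x) (A.symm y) := by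
        rw [hv, ← hAx, Equiv.symm_apply_apply]
      rw [this]
      refine lt_of_le_of_lt (h2 x y) ?_
      calc c * max d (d ^ μ) = max (c * d) (c * d ^ μ) := by
            rw [mul_max_of_nonneg _ _ hc0.le]
        _ < r₀ / 2 := by
            apply max_lt <;> · rw [show r₀ / 2 = c * (r₀ / (2 * c)) by field_simp]
                               exact (mul_lt_mul_iff_right₀ hc0).mpr (by assumption)
    have hx₀ : x₀ ∈ Metric.ball x₀ r₀ := Metric.mem_ball_self hr₀
    have hvmem : v ∈ Metric.ball x₀ r₀ := by
      rw [Metric.mem_ball, dist_comm]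
      linarith
    have hH := hHolder A hAG x₀ hx₀ v hvmem
    rw [hAx, Equiv.apply_symm_apply] at hH
    refine lt_of_le_of_lt hH ?_
    have hbound : dist x₀ v ≤ c * max d (d ^ μ) := by
      have : dist x₀ v = dist (A.symm x) (A.symm y) := by
        rw [hv, ← hAx, Equiv.symm_apply_apply]
      rw [this]; exact h2 x y
    have hm0 : 0 ≤ max d (d ^ μ) := le_max_of_le_left hd0
    have step1 : dist x₀ v ^ α ≤ (c * max d (d ^ μ)) ^ α :=
      Real.rpow_le_rpow dist_nonneg hbound hα0.le
    have step2 : (c * max d (d ^ μ)) ^ α = c ^ α * (max d (d ^ μ)) ^ α :=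
      Real.mul_rpow hc0.le hm0
    have step3 : (max d (d ^ μ)) ^ α < ε / (L * c ^ α) := by
      rcases max_choice d (d ^ μ) with h | h <;> rw [h]
      · exact hd3
      · exact hd4
    calc L * dist x₀ v ^ α ≤ L * (c ^ α * (max d (d ^ μ)) ^ α) := by
          rw [← step2]; exact mul_le_mul_of_nonneg_left step1 hL.le
      _ < L * (c ^ α * (ε / (L * c ^ α))) := by
          apply mul_lt_mul_of_pos_left _ hL
          exact mul_lt_mul_of_pos_left step3 hcα
      _ = ε := by field_simp
  refine ⟨?_, key⟩
  intro ε hε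
  set M := min (min (r₀ / (2 * c)) ((r₀ / (2 * c)) ^ (1 / μ)))
              (min ((ε / (L * c ^ α)) ^ (1 / α)) ((ε / (L * c ^ α)) ^ (1 / (α * μ))))
  have hT : (0 : ℝ) < ε / (L * c ^ α) := by positivity
  have hM : 0 < M := by
    apply lt_min <;> apply lt_min
    · exact hr2c
    · exact Real.rpow_pos_of_pos hr2c _
    · exact Real.rpow_pos_of_pos hT _
    · exact Real.rpow_pos_of_pos hT _
  exact ⟨M / 2, by linarith, key ε hε (M / 2) (by linarith) (by linarith)⟩
end
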